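/- Let u : ℝ → ℝ be of class C³, let a,b,c,d ∈ ℝ satisfy ad − bc = 1, and let x ∈ ℝ with cx + d ≠ 0. Set φ(y) = (ay + b)/(cy + d) and suppose u'(φ(x)) ≠ 0. Then I(u ∘ φ)(x) = I(u)(φ(x)); that is, the third-order expression I is a differential invariant of the SL(2,ℝ)-action (x,u) ↦ ((ax+b)/(cx+d), u) on ℝ². -/

import Mathlib

/-- The third-order Schwarzian-type expression
`I(f)(x) = (2 f'(x) f'''(x) − 3 f''(x)²) / (2 f'(x)⁴)`. -/
noncomputable def invI (f : ℝ → ℝ) (x : ℝ) : ℝ :=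
  (2 * deriv f x * iteratedDeriv 3 f x - 3 * (iteratedDeriv 2 f x) ^ 2) /
    (2 * (deriv f x) ^ 4)

/-- `I` is a third-order differential invariant of the SL(2,ℝ)-action
`(x,u) ↦ ((ax+b)/(cx+d), u)` on `ℝ²`. -/
theorem stmt0 (u : ℝ → ℝ) (hu : ContDiff ℝ 3 u) (a b c d : ℝ)
    (hdet : a * d - b * c = 1) (x : ℝ) (hden : c * x + d ≠ 0)
    (φ : ℝ → ℝ) (hφ : ∀ y, φ y = (a * y + b) / (c * y + d))
    (hu' : deriv u (φ x) ≠ 0) :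
    invI (u ∘ φ) x = invI u (φ x) := by
  have hφe : φ = fun y => (a * y + b) / (c * y + d) := funext hφ
  subst hφe
  set φ : ℝ → ℝ := fun y => (a * y + b) / (c * y + d) with hφdef
  -- regularity of u
  have h3 : ContDiff ℝ (2+1) u := by norm_num at hu ⊢; exact hu
  have hud2 : ContDiff ℝ 2 (deriv u) := (contDiff_succ_iff_deriv.mp h3).2.2
  have h2' : ContDiff ℝ (1+1) (deriv u) := by norm_num at hud2 ⊢; exact hud2
  have hud1 : ContDiff ℝ 1 (deriv (deriv u)) := (contDiff_succ_iff_deriv.mp h2').2.2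
  have hu1 : Differentiable ℝ u := h3.differentiable (by norm_num)
  have hu2 : Differentiable ℝ (deriv u) := hud2.differentiable (by norm_num)
  have hu3 : Differentiable ℝ (deriv (deriv u)) := hud1.differentiable (by norm_num)
  -- neighborhood of x where the denominator is nonzero
  have hopen : ∀ᶠ y in nhds x, c * y + d ≠ 0 :=
    ((continuous_const.mul continuous_id).add continuous_const).continuousAt.eventually_ne hden
  -- derivative of the Möbius map
  have hφ' : ∀ y : ℝ, c * y + d ≠ 0 →
      HasDerivAt φ (((c * y + d)⁻¹) ^ 2) y := by
    intro y hy
    have h1 : HasDerivAt (fun y : ℝ => a * y + b) a y := by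
      simpa using ((hasDerivAt_id y).const_mul a).add_const b
    have h2 : HasDerivAt (fun y : ℝ => c * y + d) c y := by
      simpa using ((hasDerivAt_id y).const_mul c).add_const d
    have h := h1.div h2 hy
    have e : a * (c * y + d) - (a * y + b) * c = 1 := by linear_combination hdet
    rw [e] at h
    have h' : HasDerivAt φ (1 / (c * y + d) ^ 2) y := h
    simpa [inv_pow, one_div] using h'
  -- derivative of t(y) = (c y + d)⁻¹
  have ht' : ∀ y : ℝ, c * y + d ≠ 0 →
      HasDerivAt (fun y : ℝ => (c * y + d)⁻¹) (-(c * ((c * y + d)⁻¹) ^ 2)) y := by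
    intro y hy
    have h2 : HasDerivAt (fun y : ℝ => c * y + d) c y := by
      simpa using ((hasDerivAt_id y).const_mul c).add_const d
    have h := h2.inv hy
    have h' : HasDerivAt (fun y : ℝ => (c * y + d)⁻¹) _ y := h
    convert h' using 1
    rw [inv_pow]
    ring
  -- first derivative of u ∘ φ near x
  have hG1 : deriv (u ∘ φ) =ᶠ[nhds x]
      fun y => deriv u (φ y) * ((c * y + d)⁻¹) ^ 2 := by
    refine hopen.mono fun y hy => ?_
    exact ((hu1 (φ y)).hasDerivAt.comp y (hφ' y hy)).deriv
  -- second derivative of u ∘ φ near x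
  have hG2 : deriv (deriv (u ∘ φ)) =ᶠ[nhds x]
      fun y => deriv (deriv u) (φ y) * ((c * y + d)⁻¹) ^ 4
        - 2 * c * (deriv u (φ y) * ((c * y + d)⁻¹) ^ 3) := by
    refine (hG1.deriv.and hopen).mono fun y ⟨h1, hy⟩ => ?_
    rw [h1]
    have hA : HasDerivAt (fun z => deriv u (φ z))
        (deriv (deriv u) (φ y) * ((c * y + d)⁻¹) ^ 2) y :=
      (hu2 (φ y)).hasDerivAt.comp y (hφ' y hy)
    have hB : HasDerivAt (fun z : ℝ => ((c * z + d)⁻¹) ^ 2)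
        ((2 : ℕ) * ((c * y + d)⁻¹) ^ 1 * (-(c * ((c * y + d)⁻¹) ^ 2))) y :=
      (ht' y hy).pow 2
    rw [show (fun y => deriv u (φ y) * ((c * y + d)⁻¹) ^ 2) = (fun z => deriv u (φ z)) * (fun z : ℝ => ((c * z + d)⁻¹) ^ 2) from rfl, (hA.mul hB).deriv]
    push_cast
    ring
  -- third derivative of u ∘ φ at x
  have hC : HasDerivAt (fun z => deriv (deriv u) (φ z))
      (deriv (deriv (deriv u)) (φ x) * ((c * x + d)⁻¹) ^ 2) x :=
    (hu3 (φ x)).hasDerivAt.comp x (hφ' x hden)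
  have hD : HasDerivAt (fun z : ℝ => ((c * z + d)⁻¹) ^ 4)
      ((4 : ℕ) * ((c * x + d)⁻¹) ^ 3 * (-(c * ((c * x + d)⁻¹) ^ 2))) x :=
    (ht' x hden).pow 4
  have hE : HasDerivAt (fun z => deriv u (φ z))
      (deriv (deriv u) (φ x) * ((c * x + d)⁻¹) ^ 2) x :=
    (hu2 (φ x)).hasDerivAt.comp x (hφ' x hden)
  have hF : HasDerivAt (fun z : ℝ => ((c * z + d)⁻¹) ^ 3)
      ((3 : ℕ) * ((c * x + d)⁻¹) ^ 2 * (-(c * ((c * x + d)⁻¹) ^ 2))) x :=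
    (ht' x hden).pow 3
  have hTot := ((hC.mul hD).sub (HasDerivAt.const_mul (2 * c) (hE.mul hF))).deriv
  have hG3 : deriv (deriv (deriv (u ∘ φ))) x =
      deriv (deriv (deriv u)) (φ x) * ((c * x + d)⁻¹) ^ 2 * ((c * x + d)⁻¹) ^ 4
        + deriv (deriv u) (φ x) * ((4 : ℕ) * ((c * x + d)⁻¹) ^ 3 * (-(c * ((c * x + d)⁻¹) ^ 2)))
        - 2 * c * (deriv (deriv u) (φ x) * ((c * x + d)⁻¹) ^ 2 * ((c * x + d)⁻¹) ^ 3
            + deriv u (φ x) * ((3 : ℕ) * ((c * x + d)⁻¹) ^ 2 * (-(c * ((c * x + d)⁻¹) ^ 2)))) := by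
    rw [hG2.deriv.self_of_nhds]; exact hTot
  have e1 : deriv (u ∘ φ) x = deriv u (φ x) * ((c * x + d)⁻¹) ^ 2 := hG1.self_of_nhds
  have e2 : deriv (deriv (u ∘ φ)) x = deriv (deriv u) (φ x) * ((c * x + d)⁻¹) ^ 4
      - 2 * c * (deriv u (φ x) * ((c * x + d)⁻¹) ^ 3) := hG2.self_of_nhds
  have i2 : iteratedDeriv 2 (u ∘ φ) x = deriv (deriv (u ∘ φ)) x := by
    rw [show (2:ℕ) = 1+1 from rfl, iteratedDeriv_succ, iteratedDeriv_one]
  have i3 : iteratedDeriv 3 (u ∘ φ) x = deriv (deriv (deriv (u ∘ φ))) x := by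
    rw [show (3:ℕ) = 1+1+1 from rfl, iteratedDeriv_succ, iteratedDeriv_succ, iteratedDeriv_one]
  have j2 : iteratedDeriv 2 u (φ x) = deriv (deriv u) (φ x) := by
    rw [show (2:ℕ) = 1+1 from rfl, iteratedDeriv_succ, iteratedDeriv_one]
  have j3 : iteratedDeriv 3 u (φ x) = deriv (deriv (deriv u)) (φ x) := by
    rw [show (3:ℕ) = 1+1+1 from rfl, iteratedDeriv_succ, iteratedDeriv_succ, iteratedDeriv_one]
  have hT : (c * x + d)⁻¹ ≠ 0 := inv_ne_zero hden
  rw [invI, invI, i2, i3, j2, j3, e1, e2, hG3]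
  push_cast
  field_simp
  ring
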